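/- Let d ≥ 2 and σ_d(θ)=dθ on ℝ/ℤ. Let G be a σ_d-periodic gap of period n such that σ_dⁿ restricted to the vertex set G ∩ S¹ is injective and monotonically semiconjugate to an irrational circle rotation via a monotone map φ : ∂G → S¹. Then every fiber of φ contains at most finitely many edges of G; equivalently, no fiber of φ is an infinite concatenation of edges of G. -/
import Mathlib


open Metric Set

noncomputable section

instance : Fact ((0:ℝ) < 1) := ⟨one_pos⟩

/-- The point on the unit circle in `ℂ` corresponding to `x ∈ ℝ/ℤ`, i.e. `exp(2πix)`. -/
noncomputable def pt (x : AddCircle (1:ℝ)) : ℂ := (AddCircle.toCircle x : ℂ)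

/-- The chord of the closed unit disk joining `pt a` and `pt b`. -/
noncomputable def chord (a b : AddCircle (1:ℝ)) : Set ℂ := segment ℝ (pt a) (pt b)

/-- The map `θ ↦ dθ` on `ℝ/ℤ`. -/
def sig (d : ℕ) (x : AddCircle (1:ℝ)) : AddCircle (1:ℝ) := d • x

/-- Two chords are linked (cross) if they are distinct and intersect in the open unit disk. -/
def Linked (a b x y : AddCircle (1:ℝ)) : Prop :=
  chord a b ≠ chord x y ∧ (chord a b ∩ chord x y ∩ Metric.ball (0:ℂ) 1).Nonempty

/-- The representative of `x ∈ ℝ/ℤ` in `[0,1)`. -/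
noncomputable def rep (x : AddCircle (1:ℝ)) : ℝ := ((AddCircle.equivIco 1 0) x : ℝ)

/-- The open positively oriented arc from `a` to `b`. -/
def arc (a b : AddCircle (1:ℝ)) : Set (AddCircle (1:ℝ)) :=
  {x | 0 < rep (x - a) ∧ rep (x - a) < rep (b - a)}

/-- The closed positively oriented arc from `a` to `b`. -/
def closedArc (a b : AddCircle (1:ℝ)) : Set (AddCircle (1:ℝ)) := arc a b ∪ {a, b}

/-- `(a,b)` is a hole of `A`: `a, b ∈ A` and the nonempty open arc `(a,b)` misses `A`. -/
def IsHole (A : Set (AddCircle (1:ℝ))) (a b : AddCircle (1:ℝ)) : Prop :=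
  a ∈ A ∧ b ∈ A ∧ (arc a b).Nonempty ∧ arc a b ∩ A = ∅

/-- The convex hull in `ℂ` of the set of circle points corresponding to `A ⊆ ℝ/ℤ`. -/
noncomputable def hull (A : Set (AddCircle (1:ℝ))) : Set ℂ := convexHull ℝ (pt '' A)

/-- `p, q, r` are distinct and in strict positive circular order. -/
def cyc (p q r : AddCircle (1:ℝ)) : Prop := 0 < rep (q - p) ∧ rep (q - p) < rep (r - p)

/-- A tuple of circle points is in (weak) positive circular order. -/
def CircOrd {k : ℕ} [NeZero k] (v : Fin k → AddCircle (1:ℝ)) : Prop :=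
  Monotone fun i => rep (v i - v 0)

/-! ### Auxiliary lemmas -/

theorem coe_rep (x : AddCircle (1:ℝ)) : ((rep x : ℝ) : AddCircle (1:ℝ)) = x :=
  (AddCircle.equivIco 1 0).symm_apply_apply x

theorem rep_coe (r : ℝ) : rep ((r : ℝ) : AddCircle (1:ℝ)) = Int.fract r := by
  have := AddCircle.coe_equivIco_mk_apply (p := (1:ℝ)) r
  simpa [rep, div_one] using this

theorem rep_mem (x : AddCircle (1:ℝ)) : rep x ∈ Set.Ico (0:ℝ) 1 := by
  have := ((AddCircle.equivIco 1 0) x).2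
  simpa [rep] using this

theorem rep_eq_zero_iff {x : AddCircle (1:ℝ)} : rep x = 0 ↔ x = 0 := by
  constructor
  · intro h
    have := coe_rep x
    rw [h] at this
    simpa using this.symm
  · rintro rfl
    have : ((0:ℝ) : AddCircle (1:ℝ)) = 0 := by norm_num
    rw [← this, rep_coe]
    norm_num

theorem sig_iter (d m : ℕ) (x : AddCircle (1:ℝ)) : (sig d)^[m] x = d ^ m • x := by
  induction m with
  | zero => simp
  | succ m ih => rw [Function.iterate_succ_apply', ih, sig, smul_smul, pow_succ, mul_comm]

theorem smul_coe (c : ℕ) (r : ℝ) :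
    c • ((r : ℝ) : AddCircle (1:ℝ)) = (((c : ℝ) * r : ℝ) : AddCircle (1:ℝ)) := by
  rw [← nsmul_eq_mul]
  exact (QuotientAddGroup.mk_nsmul _ r c).symm

theorem sub_iter (d m : ℕ) (a b : AddCircle (1:ℝ)) :
    (sig d)^[m] b - (sig d)^[m] a = ((((d:ℝ) ^ m * rep (b - a)) : ℝ) : AddCircle (1:ℝ)) := by
  conv_lhs => rw [sig_iter, sig_iter, ← smul_sub, ← coe_rep (b - a), smul_coe]
  push_cast
  ring_nf

theorem fract_mul_fract (c x : ℝ) (hc : ∃ m : ℤ, (m:ℝ) = c) :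
    Int.fract (c * Int.fract x) = Int.fract (c * x) := by
  obtain ⟨m, rfl⟩ := hc
  have : (m:ℝ) * Int.fract x = m * x - (m * ⌊x⌋ : ℤ) := by
    push_cast
    rw [Int.fract]
    ring
  rw [this, Int.fract_sub_intCast]

theorem fract_ge_inv {d : ℕ} (hd : 2 ≤ d) {x : ℝ} (hx0 : 0 < x)
    (h : Int.fract ((d:ℝ) * x) = 0) : 1 / (d:ℝ) ≤ x := by
  have hdpos : (0:ℝ) < d := by positivity
  have hfl : (d:ℝ) * x = (⌊(d:ℝ) * x⌋ : ℝ) := by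
    rw [Int.fract] at h
    linarith
  have h0 : (0:ℤ) < ⌊(d:ℝ) * x⌋ := by
    have : (0:ℝ) < (⌊(d:ℝ) * x⌋ : ℝ) := by rw [← hfl]; positivity
    exact_mod_cast this
  have h1 : (1:ℝ) ≤ (⌊(d:ℝ) * x⌋ : ℝ) := by exact_mod_cast h0
  rw [div_le_iff₀ hdpos, mul_comm]
  linarith

theorem fract_le_self_of_nonneg {x : ℝ} (hx : 0 ≤ x) : Int.fract x ≤ x := by
  have : (0:ℝ) ≤ (⌊x⌋ : ℝ) := by exact_mod_cast Int.floor_nonneg.mpr hx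
  rw [Int.fract]
  linarith

/-- Pigeonhole: a `1/D`-separated family of reals in `[0,1)` is finite. -/
theorem finite_sep {β : Type*} (D : ℕ) (hD : 0 < D) (P : Set β) (f : β → ℝ)
    (h0 : ∀ x ∈ P, f x ∈ Set.Ico (0:ℝ) 1)
    (hsep : ∀ x ∈ P, ∀ y ∈ P, x ≠ y → 1 / (D:ℝ) ≤ |f x - f y|) : P.Finite := by
  have hDpos : (0:ℝ) < D := by exact_mod_cast hD
  apply Set.Finite.of_finite_image (f := fun x => ⌊f x * D⌋)
  · apply Set.Finite.subset (Set.finite_Icc (0:ℤ) D)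
    rintro k ⟨x, hx, rfl⟩
    have h1 := (h0 x hx).1
    have h2 := (h0 x hx).2
    refine ⟨Int.floor_nonneg.mpr (by positivity), ?_⟩
    have hlt : f x * D < D := by nlinarith
    have := Int.floor_le_floor hlt.le
    simpa using this
  · intro x hx y hy hxy
    by_contra hne
    have hs := hsep x hx y hy hne
    simp only at hxy
    have b1 : |f x * D - f y * D| < 1 := by
      have e1 := Int.floor_le (f x * D)
      have e2 := Int.lt_floor_add_one (f x * D)
      have e3 := Int.floor_le (f y * D)
      have e4 := Int.lt_floor_add_one (f y * D)
      rw [hxy] at e1 e2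
      rw [abs_lt]
      constructor <;> linarith
    have b2 : |f x - f y| * D < 1 := by
      calc |f x - f y| * D = |f x - f y| * |(D:ℝ)| := by rw [abs_of_pos hDpos]
      _ = |f x * D - f y * D| := by rw [← abs_mul]; ring_nf
      _ < 1 := b1
    have : 1/(D:ℝ) * D ≤ |f x - f y| * D := mul_le_mul_of_nonneg_right hs hDpos.le
    rw [one_div_mul_cancel hDpos.ne'] at this
    linarith

theorem hole_len_pos {A : Set (AddCircle (1:ℝ))} {a b : AddCircle (1:ℝ)} (h : IsHole A a b) :
    0 < rep (b - a) := by
  obtain ⟨x, hx1, hx2⟩ := h.2.2.1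
  linarith

theorem hole_sep {A : Set (AddCircle (1:ℝ))} {a b c : AddCircle (1:ℝ)} (h : IsHole A a b)
    (hc : c ∈ A) (hca : c ≠ a) : rep (b - a) ≤ rep (c - a) := by
  have hnotin : c ∉ arc a b := by
    intro hin
    have := h.2.2.2
    exact absurd (Set.mem_inter hin hc) (by rw [this]; exact id)
  by_contra hlt
  push_neg at hlt
  apply hnotin
  refine ⟨?_, hlt⟩
  rcases lt_or_eq_of_le (rep_mem (c - a)).1 with h0 | h0
  · exact h0
  · exact absurd (by rw [← sub_eq_zero]; exact rep_eq_zero_iff.mp h0.symm) hca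

theorem hole_ne {A : Set (AddCircle (1:ℝ))} {a b : AddCircle (1:ℝ)} (h : IsHole A a b) :
    b ≠ a := by
  intro he
  have := hole_len_pos h
  rw [he, sub_self, rep_eq_zero_iff.mpr rfl] at this
  exact lt_irrefl _ this

/-- A hole is determined by its left endpoint. -/
theorem hole_right_unique {A : Set (AddCircle (1:ℝ))} {a b b' : AddCircle (1:ℝ)}
    (h : IsHole A a b) (h' : IsHole A a b') : b = b' := by
  have l1 := hole_sep h h'.2.1 (hole_ne h')
  have l2 := hole_sep h' h.2.1 (hole_ne h)
  have e : b - a = b' - a := by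
    rw [← coe_rep (b - a), ← coe_rep (b' - a), le_antisymm l1 l2]
  exact sub_left_injective e

/-- The set of holes of `B` of length at least `1/D` is finite. -/
theorem holes_long_finite (B : Set (AddCircle (1:ℝ))) (D : ℕ) (hD : 0 < D) :
    {e : AddCircle (1:ℝ) × AddCircle (1:ℝ) |
      IsHole B e.1 e.2 ∧ 1 / (D:ℝ) ≤ rep (e.2 - e.1)}.Finite := by
  set P := {e : AddCircle (1:ℝ) × AddCircle (1:ℝ) |
      IsHole B e.1 e.2 ∧ 1 / (D:ℝ) ≤ rep (e.2 - e.1)} with hP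
  rcases Set.eq_empty_or_nonempty P with he | ⟨e₀, he₀⟩
  · rw [he]; exact Set.finite_empty
  · have key : ∀ e ∈ P, ∀ e' ∈ P, e ≠ e' →
        1 / (D:ℝ) ≤ rep (e'.1 - e.1) ∧ e.1 ≠ e'.1 := by
      intro e he e' he' hne
      have h1 : e.1 ≠ e'.1 := by
        intro hfst
        apply hne
        have : e.2 = e'.2 := by
          apply hole_right_unique he.1
          rw [hfst]
          exact he'.1
        exact Prod.ext hfst this
      refine ⟨?_, h1⟩
      have := hole_sep he.1 he'.1.1 (Ne.symm h1)
      linarith [he.2]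
    apply finite_sep D hD P (fun e => rep (e.1 - e₀.1))
    · intro x _
      exact rep_mem _
    · intro e he e' he' hne
      obtain ⟨s1, hfst⟩ := key e he e' he' hne
      obtain ⟨s2, _⟩ := key e' he' e he (Ne.symm hne)
      set t := rep (e.1 - e₀.1) with ht
      set t' := rep (e'.1 - e₀.1) with ht'
      have a1 : e.1 - e₀.1 = ((t:ℝ) : AddCircle (1:ℝ)) := (coe_rep _).symm
      have a2 : e'.1 - e₀.1 = ((t':ℝ) : AddCircle (1:ℝ)) := (coe_rep _).symm
      have hsub : e'.1 - e.1 = ((t' - t : ℝ) : AddCircle (1:ℝ)) := by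
        have : e'.1 - e.1 = (e'.1 - e₀.1) - (e.1 - e₀.1) := by abel
        rw [this, a1, a2, ← AddCircle.coe_sub]
      have hsub' : e.1 - e'.1 = ((t - t' : ℝ) : AddCircle (1:ℝ)) := by
        have : e.1 - e'.1 = (e.1 - e₀.1) - (e'.1 - e₀.1) := by abel
        rw [this, a1, a2, ← AddCircle.coe_sub]
      have htt' : t ≠ t' := by
        intro h
        apply hfst
        rw [← sub_eq_zero, hsub', h, sub_self]
        norm_num
      rcases lt_or_gt_of_ne htt' with hlt | hgt
      · have : rep (e'.1 - e.1) = t' - t := by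
          rw [hsub, rep_coe, Int.fract_eq_self.mpr]
          constructor
          · linarith
          · have u1 := (rep_mem (e'.1 - e₀.1)).2
            have u2 := (rep_mem (e.1 - e₀.1)).1
            simp only [← ht, ← ht'] at u1 u2
            linarith
        rw [abs_sub_comm, abs_of_pos (by linarith)]
        linarith [s1, this]
      · have : rep (e.1 - e'.1) = t - t' := by
          rw [hsub', rep_coe, Int.fract_eq_self.mpr]
          constructor
          · linarith
          · have u1 := (rep_mem (e.1 - e₀.1)).2
            have u2 := (rep_mem (e'.1 - e₀.1)).1
            simp only [← ht, ← ht'] at u1 u2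
            linarith
        rw [abs_of_pos (by linarith)]
        linarith [s2, this]

section dyn
variable {d n : ℕ} {A : Set (AddCircle (1:ℝ))}

theorem imageA (hinv : (sig d)^[n] '' A = A) (k : ℕ) : (sig d)^[k*n] '' A = A := by
  induction k with
  | zero => simp
  | succ k ih =>
    have : (k+1)*n = k*n + n := by ring
    rw [this, Function.iterate_add, Set.image_comp, hinv, ih]

theorem memA (hinv : (sig d)^[n] '' A = A) {x : AddCircle (1:ℝ)} (hx : x ∈ A) (k : ℕ) :
    (sig d)^[k*n] x ∈ A := by
  rw [← imageA hinv k]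
  exact Set.mem_image_of_mem _ hx

theorem injA (hn : 0 < n) (hinv : (sig d)^[n] '' A = A) (hinj : Set.InjOn ((sig d)^[n]) A)
    (m : ℕ) : Set.InjOn ((sig d)^[m]) A := by
  have hkn : ∀ k : ℕ, Set.InjOn ((sig d)^[k*n]) A := by
    intro k
    induction k with
    | zero => simpa using Set.injOn_id A
    | succ k ih =>
      intro x hx y hy hxy
      have e : (k+1)*n = k*n + n := by ring
      rw [e, Function.iterate_add_apply, Function.iterate_add_apply] at hxy
      have hx' : (sig d)^[n] x ∈ A := by rw [← hinv]; exact Set.mem_image_of_mem _ hx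
      have hy' : (sig d)^[n] y ∈ A := by rw [← hinv]; exact Set.mem_image_of_mem _ hy
      exact hinj hx hy (ih hx' hy' hxy)
  intro x hx y hy hxy
  have : (sig d)^[m*n] x = (sig d)^[m*n] y := by
    have e : m*n = (m*n - m) + m := by
      have : m ≤ m * n := Nat.le_mul_of_pos_right m hn
      omega
    rw [e, Function.iterate_add_apply, Function.iterate_add_apply, hxy]
  exact hkn m hx hy this

theorem persist (hhole : ∀ i : ℕ, ∀ a b, IsHole ((sig d)^[i] '' A) a b →
      sig d a = sig d b ∨ IsHole ((sig d)^[i+1] '' A) (sig d a) (sig d b))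
    {a b : AddCircle (1:ℝ)} (h : IsHole A a b) (m : ℕ)
    (hnc : ∀ i < m, Int.fract ((d:ℝ)^(i+1) * rep (b - a)) ≠ 0) :
    IsHole ((sig d)^[m] '' A) ((sig d)^[m] a) ((sig d)^[m] b) := by
  induction m with
  | zero => simpa using h
  | succ m ih =>
    have hm := ih (fun i hi => hnc i (Nat.lt_succ_of_lt hi))
    rcases hhole m _ _ hm with hc | hgood
    · exfalso
      apply hnc m (Nat.lt_succ_self m)
      have e : (sig d)^[m+1] a = (sig d)^[m+1] b := by
        rw [Function.iterate_succ_apply', Function.iterate_succ_apply', hc]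
      have h0 : (sig d)^[m+1] b - (sig d)^[m+1] a = 0 := by rw [e, sub_self]
      rw [sub_iter] at h0
      rw [← rep_coe]
      exact rep_eq_zero_iff.mpr h0
    · rw [Function.iterate_succ_apply', Function.iterate_succ_apply']
      exact hgood

theorem phi_iter (hinv : (sig d)^[n] '' A = A)
    (φ : AddCircle (1:ℝ) → AddCircle (1:ℝ)) (α : ℝ)
    (hsemi : ∀ x ∈ A, φ ((sig d)^[n] x) = φ x + (α : AddCircle (1:ℝ)))
    {x : AddCircle (1:ℝ)} (hx : x ∈ A) (k : ℕ) :
    φ ((sig d)^[k*n] x) = φ x + k • ((α : ℝ) : AddCircle (1:ℝ)) := by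
  induction k with
  | zero => simp
  | succ k ih =>
    have e : (k+1)*n = n + k*n := by ring
    rw [e, Function.iterate_add_apply]
    rw [hsemi _ (memA hinv hx k), ih, succ_nsmul]
    abel

end dyn

theorem alpha_ne {α : ℝ} (hα : Irrational α) {k k' : ℕ} (hkk : k ≠ k') (y : AddCircle (1:ℝ)) :
    y + k • ((α : ℝ) : AddCircle (1:ℝ)) ≠ y + k' • ((α : ℝ) : AddCircle (1:ℝ)) := by
  intro h
  have h2 : (((k:ℝ) * α : ℝ) : AddCircle (1:ℝ)) = (((k':ℝ) * α : ℝ) : AddCircle (1:ℝ)) := by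
    rw [← smul_coe, ← smul_coe]
    exact add_left_cancel h
  have h3 : (((k:ℝ) * α - (k':ℝ) * α : ℝ) : AddCircle (1:ℝ)) = 0 := by
    rw [AddCircle.coe_sub, h2, sub_self]
  obtain ⟨z, hz⟩ := (AddCircle.coe_eq_zero_iff (1:ℝ)).mp h3
  simp only [zsmul_eq_mul, mul_one] at hz
  have hc : ((k:ℝ) - (k':ℝ)) ≠ 0 := by
    intro h0
    apply hkk
    have : (k:ℝ) = (k':ℝ) := by linarith
    exact_mod_cast this
  have hαval : α = (z:ℝ) / ((k:ℝ) - (k':ℝ)) := by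
    field_simp
    nlinarith [hz]
  apply hα
  refine ⟨(z:ℚ) / ((k:ℚ) - (k':ℚ)), ?_⟩
  rw [hαval]
  push_cast
  ring

/-- Every hole of `A` eventually collapses under `sig d`. -/
theorem collapse_exists {d n : ℕ} (hd : 2 ≤ d) (hn : 0 < n) {A : Set (AddCircle (1:ℝ))}
    (hinv : (sig d)^[n] '' A = A)
    (hhole : ∀ i : ℕ, ∀ a b, IsHole ((sig d)^[i] '' A) a b →
      sig d a = sig d b ∨ IsHole ((sig d)^[i+1] '' A) (sig d a) (sig d b))
    (φ : AddCircle (1:ℝ) → AddCircle (1:ℝ)) (α : ℝ) (hα : Irrational α)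
    (hsemi : ∀ x ∈ A, φ ((sig d)^[n] x) = φ x + (α : AddCircle (1:ℝ)))
    {a b : AddCircle (1:ℝ)} (h : IsHole A a b) :
    ∃ m : ℕ, Int.fract ((d:ℝ)^(m+1) * rep (b - a)) = 0 := by
  by_contra hno
  push_neg at hno
  set ℓ := rep (b - a) with hℓ
  have hdpos : (0:ℝ) < d := by positivity
  have hdn2 : (2:ℝ) ≤ (d:ℝ)^n := by
    calc (2:ℝ) ≤ (d:ℝ) := by exact_mod_cast hd
    _ = (d:ℝ)^1 := (pow_one _).symm
    _ ≤ (d:ℝ)^n := pow_le_pow_right₀ (by exact_mod_cast (le_trans one_le_two hd)) hn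
  -- holes at every return time
  have hk : ∀ k : ℕ, IsHole A ((sig d)^[k*n] a) ((sig d)^[k*n] b) := by
    intro k
    have := persist hhole h (k*n) (fun i _ => hno i)
    rwa [imageA hinv k] at this
  set u : ℕ → ℝ := fun k => Int.fract ((d:ℝ)^(k*n) * ℓ) with hu
  have hlen : ∀ k : ℕ, rep ((sig d)^[k*n] b - (sig d)^[k*n] a) = u k := by
    intro k
    rw [sub_iter, rep_coe]
  have upos : ∀ k, 0 < u k := by
    intro k
    have := hole_len_pos (hk k)
    rwa [hlen k] at this
  have ulte : ∀ k, u k < 1 := fun k => Int.fract_lt_one _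
  -- the set of long returns is finite
  set V : Set ℕ := {k | 1 / ((d^n : ℕ) : ℝ) ≤ u k} with hV
  have hVfin : V.Finite := by
    have hTfin := holes_long_finite A (d^n) (by positivity)
    apply Set.Finite.of_finite_image
      (f := fun k => (((sig d)^[k*n] a : AddCircle (1:ℝ)), ((sig d)^[k*n] b : AddCircle (1:ℝ))))
    · apply Set.Finite.subset hTfin
      rintro e ⟨k, hkV, rfl⟩
      refine ⟨hk k, ?_⟩
      rw [hlen k]
      exact hkV
    · intro k hkV k' hkV' heq
      by_contra hne
      have e1 := phi_iter hinv φ α hsemi h.1 k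
      have e2 := phi_iter hinv φ α hsemi h.1 k'
      have : (sig d)^[k*n] a = (sig d)^[k'*n] a := congrArg Prod.fst heq
      rw [this, e2] at e1
      exact alpha_ne hα hne (φ a) e1.symm
  -- so eventually all returns are short
  obtain ⟨K, hK⟩ := hVfin.bddAbove
  have hsmall : ∀ k, K + 1 ≤ k → u k < 1 / ((d^n : ℕ) : ℝ) := by
    intro k hks
    by_contra hbig
    push_neg at hbig
    have : k ∈ V := hbig
    have := hK this
    omega
  -- recursion for lengths
  have hrec : ∀ k, u (k+1) = Int.fract ((d:ℝ)^n * u k) := by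
    intro k
    rw [hu]
    simp only
    rw [fract_mul_fract _ _ ⟨(d^n : ℤ), by push_cast; ring⟩]
    congr 1
    rw [← mul_assoc, ← pow_add]
    congr 2
    ring
  have hcast : ((d^n : ℕ) : ℝ) = (d:ℝ)^n := by push_cast; ring
  -- growth
  have grow : ∀ j : ℕ, 2^j * u (K+1) ≤ u (K+1+j) := by
    intro j
    induction j with
    | zero => simp
    | succ j ih =>
      have hsj := hsmall (K+1+j) (by omega)
      have hfe : u (K+1+j+1) = (d:ℝ)^n * u (K+1+j) := by
        rw [hrec]
        rw [Int.fract_eq_self.mpr]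
        constructor
        · exact mul_nonneg (by positivity) (upos _).le
        · rw [hcast] at hsj
          calc (d:ℝ)^n * u (K+1+j) < (d:ℝ)^n * (1/(d:ℝ)^n) :=
            mul_lt_mul_of_pos_left hsj (by positivity)
          _ = 1 := by field_simp
      show 2^(j+1) * u (K+1) ≤ u (K+1+j+1)
      rw [hfe]
      calc 2^(j+1) * u (K+1) = 2 * (2^j * u (K+1)) := by ring
      _ ≤ 2 * u (K+1+j) := by linarith [ih]
      _ ≤ (d:ℝ)^n * u (K+1+j) := mul_le_mul_of_nonneg_right hdn2 (upos _).le
  -- contradiction: u (K+1+j) would exceed 1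
  obtain ⟨j, hj⟩ := pow_unbounded_of_one_lt (1 / u (K+1)) (one_lt_two (α := ℝ))
  have h1 : 1 < 2^j * u (K+1) := by
    have := upos (K+1)
    rw [div_lt_iff₀ this] at hj
    linarith
  have := grow j
  have := ulte (K+1+j)
  linarith

/-- for a periodic gap of degree one whose return map is monotonically
semiconjugate to an irrational rotation, every fiber of the semiconjugacy contains
at most finitely many edges of the gap. -/
theorem stmt_12 (d : ℕ) (hd : 2 ≤ d) (n : ℕ) (hn : 0 < n)
    (A : Set (AddCircle (1:ℝ))) (hA : IsClosed A)
    (hinv : (sig d)^[n] '' A = A)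
    (hinj : Set.InjOn ((sig d)^[n]) A)
    (hhole : ∀ i : ℕ, ∀ a b, IsHole ((sig d)^[i] '' A) a b →
      sig d a = sig d b ∨ IsHole ((sig d)^[i+1] '' A) (sig d a) (sig d b))
    (φ : AddCircle (1:ℝ) → AddCircle (1:ℝ)) (α : ℝ) (hα : Irrational α)
    (hsemi : ∀ x ∈ A, φ ((sig d)^[n] x) = φ x + (α : AddCircle (1:ℝ)))
    (hmono : ∀ p ∈ A, ∀ q ∈ A, ∀ r ∈ A, cyc p q r → ¬ cyc (φ p) (φ r) (φ q)) :
    ∀ y : AddCircle (1:ℝ),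
      {e : AddCircle (1:ℝ) × AddCircle (1:ℝ) |
        IsHole A e.1 e.2 ∧ φ e.1 = y ∧ φ e.2 = y}.Finite := by
  intro y
  by_contra hfin
  have hS : {e : AddCircle (1:ℝ) × AddCircle (1:ℝ) |
      IsHole A e.1 e.2 ∧ φ e.1 = y ∧ φ e.2 = y}.Infinite := hfin
  set S := {e : AddCircle (1:ℝ) × AddCircle (1:ℝ) |
      IsHole A e.1 e.2 ∧ φ e.1 = y ∧ φ e.2 = y} with hSdef
  have hdpos : (0:ℝ) < d := by positivity
  -- collapse time
  have hex : ∀ e ∈ S, ∃ m : ℕ, Int.fract ((d:ℝ)^(m+1) * rep (e.2 - e.1)) = 0 := by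
    intro e he
    exact collapse_exists hd hn hinv hhole φ α hα hsemi he.1
  classical
  set ct : (AddCircle (1:ℝ) × AddCircle (1:ℝ)) → ℕ := fun e =>
    if h : ∃ m : ℕ, Int.fract ((d:ℝ)^(m+1) * rep (e.2 - e.1)) = 0 then Nat.find h else 0
    with hct
  have hct_spec : ∀ e ∈ S, Int.fract ((d:ℝ)^(ct e + 1) * rep (e.2 - e.1)) = 0 := by
    intro e he
    rw [hct]
    simp only [dif_pos (hex e he)]
    exact Nat.find_spec (hex e he)
  have hct_min : ∀ e ∈ S, ∀ i < ct e, Int.fract ((d:ℝ)^(i+1) * rep (e.2 - e.1)) ≠ 0 := by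
    intro e he i hi
    rw [hct] at hi
    simp only [dif_pos (hex e he)] at hi
    exact Nat.find_min (hex e he) hi
  -- at each time, only finitely many holes collapse
  have hfib : ∀ m : ℕ, {e ∈ S | ct e = m}.Finite := by
    intro m
    have hW := holes_long_finite ((sig d)^[m] '' A) d (by omega)
    apply Set.Finite.of_finite_image (f := fun e => ((sig d)^[m] e.1, (sig d)^[m] e.2))
    · apply Set.Finite.subset hW
      rintro w ⟨e, ⟨heS, hem⟩, rfl⟩
      have hhol := persist hhole heS.1 m (fun i hi => hct_min e heS i (hem ▸ hi))
      refine ⟨hhol, ?_⟩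
      have hlen : rep ((sig d)^[m] e.2 - (sig d)^[m] e.1)
          = Int.fract ((d:ℝ)^m * rep (e.2 - e.1)) := by
        rw [sub_iter, rep_coe]
      rw [hlen]
      apply fract_ge_inv hd
      · rw [← hlen]
        exact hole_len_pos hhol
      · rw [fract_mul_fract _ _ ⟨(d : ℤ), by push_cast; ring⟩, ← mul_assoc]
        have : (d:ℝ) * (d:ℝ)^m = (d:ℝ)^(m+1) := by ring
        rw [this]
        exact hem ▸ hct_spec e heS
    · intro e he e' he' heq
      have i1 : (sig d)^[m] e.1 = (sig d)^[m] e'.1 := congrArg Prod.fst heq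
      have i2 : (sig d)^[m] e.2 = (sig d)^[m] e'.2 := congrArg Prod.snd heq
      have hinjm := injA hn hinv hinj m
      exact Prod.ext (hinjm he.1.1.1 he'.1.1.1 i1) (hinjm he.1.1.2.1 he'.1.1.2.1 i2)
  -- hence arbitrarily large collapse times occur in S
  have hbig : ∀ K : ℕ, ∃ e ∈ S, K * n ≤ ct e := by
    intro K
    by_contra hc
    push_neg at hc
    apply hS
    have : S ⊆ ⋃ m ∈ Finset.range (K*n), {e ∈ S | ct e = m} := by
      intro e he
      simp only [Set.mem_iUnion, Finset.mem_range]
      exact ⟨ct e, hc e he, he, rfl⟩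
    exact Set.Finite.subset (Set.Finite.biUnion (Finset.range (K*n)).finite_toSet
      (fun m _ => hfib m)) this
  -- long edges of A in arbitrarily late fibers
  set U : Set ℕ := {k | ∃ e : AddCircle (1:ℝ) × AddCircle (1:ℝ),
      IsHole A e.1 e.2 ∧ φ e.1 = y + k • ((α : ℝ) : AddCircle (1:ℝ)) ∧
      1 / ((d^n : ℕ) : ℝ) ≤ rep (e.2 - e.1)} with hU
  have hcast : ((d^n : ℕ) : ℝ) = (d:ℝ)^n := by push_cast; ring
  have hUbig : ∀ K : ℕ, ∃ k ∈ U, K ≤ k := by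
    intro K
    obtain ⟨e, heS, hect⟩ := hbig K
    set m := ct e with hm
    set k := m / n with hk
    have hkK : K ≤ k := Nat.le_div_iff_mul_le hn |>.mpr hect
    have hknm : k * n ≤ m := Nat.div_mul_le_self m n
    -- the k-th return of the hole
    have hhol : IsHole A ((sig d)^[k*n] e.1) ((sig d)^[k*n] e.2) := by
      have := persist hhole heS.1 (k*n) (fun i hi => hct_min e heS i (lt_of_lt_of_le hi hknm))
      rwa [imageA hinv k] at this
    have hφ : φ ((sig d)^[k*n] e.1) = y + k • ((α : ℝ) : AddCircle (1:ℝ)) := by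
      rw [phi_iter hinv φ α hsemi heS.1.1 k, heS.2.1]
    -- length estimate
    set x := Int.fract ((d:ℝ)^(k*n) * rep (e.2 - e.1)) with hx
    have hlenx : rep ((sig d)^[k*n] e.2 - (sig d)^[k*n] e.1) = x := by
      rw [sub_iter, rep_coe]
    have hxpos : 0 < x := by
      rw [← hlenx]
      exact hole_len_pos hhol
    set r := m - k*n with hr
    have hmod : m % n < n := Nat.mod_lt _ hn
    have e1' := Nat.mod_add_div' m n
    rw [← hk] at e1'
    have hrm : r = m % n := by omega
    have hrn : r < n := hrm ▸ hmod
    have hd1 : 1 / (d:ℝ) ≤ Int.fract ((d:ℝ)^m * rep (e.2 - e.1)) := by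
      have hholm := persist hhole heS.1 m (fun i hi => hct_min e heS i hi)
      have hlenm : rep ((sig d)^[m] e.2 - (sig d)^[m] e.1)
          = Int.fract ((d:ℝ)^m * rep (e.2 - e.1)) := by
        rw [sub_iter, rep_coe]
      apply fract_ge_inv hd
      · rw [← hlenm]
        exact hole_len_pos hholm
      · rw [fract_mul_fract _ _ ⟨(d : ℤ), by push_cast; ring⟩, ← mul_assoc]
        have : (d:ℝ) * (d:ℝ)^m = (d:ℝ)^(m+1) := by ring
        rw [this]
        exact hct_spec e heS
    have hsplit : Int.fract ((d:ℝ)^m * rep (e.2 - e.1)) = Int.fract ((d:ℝ)^r * x) := by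
      have hm' : (d:ℝ)^r * (d:ℝ)^(k*n) = (d:ℝ)^m := by
        rw [← pow_add]
        congr 1
        omega
      rw [hx, fract_mul_fract _ _ ⟨(d^r : ℤ), by push_cast; ring⟩, ← mul_assoc, hm']
    have hle : 1 / (d:ℝ) ≤ (d:ℝ)^r * x := by
      calc 1 / (d:ℝ) ≤ Int.fract ((d:ℝ)^r * x) := by rw [← hsplit]; exact hd1
      _ ≤ (d:ℝ)^r * x := fract_le_self_of_nonneg (by positivity)
    have hxge : 1 / ((d^n : ℕ) : ℝ) ≤ x := by
      rw [hcast]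
      have h1 : 1 / (d:ℝ)^(r+1) ≤ x := by
        rw [div_le_iff₀ (by positivity)]
        rw [div_le_iff₀ hdpos] at hle
        calc (1:ℝ) ≤ (d:ℝ)^r * x * d := hle
        _ = x * (d:ℝ)^(r+1) := by ring
      calc 1 / (d:ℝ)^n ≤ 1 / (d:ℝ)^(r+1) := by
            apply one_div_le_one_div_of_le (by positivity)
            exact pow_le_pow_right₀ (by exact_mod_cast (le_trans one_le_two hd)) (by omega)
      _ ≤ x := h1
    exact ⟨k, ⟨((sig d)^[k*n] e.1, (sig d)^[k*n] e.2), hhol, hφ, by rw [hlenx]; exact hxge⟩, hkK⟩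
  -- but U is finite
  have hUfin : U.Finite := by
    have hTfin := holes_long_finite A (d^n) (by positivity)
    apply Set.Finite.subset (Set.Finite.biUnion hTfin
      (t := fun e => {k : ℕ | φ e.1 = y + k • ((α : ℝ) : AddCircle (1:ℝ))}) ?_)
    · rintro k ⟨e, he1, he2, he3⟩
      exact Set.mem_biUnion (⟨he1, he3⟩ : _ ∧ _) he2
    · intro e _
      apply Set.Subsingleton.finite
      intro k hk k' hk'
      by_contra hne
      exact alpha_ne hα hne y (hk ▸ hk' : _)
  obtain ⟨K, hK⟩ := hUfin.bddAbove
  obtain ⟨k, hkU, hkK⟩ := hUbig (K+1)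
  have := hK hkU
  omega
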